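/- Let A be an n×n nonnegative real matrix with all row sums nonzero, let L ≥ 1 and k ≥ 0 be integers, and let α be a real number with 0 ≤ α ≤ 1. Write a_{ij}^{(L)} for the (i,j) entry of A^L. Then min over pairs (i,j) with a_{ij}^{(L)} > 0 of ( r_i(A^{k+L})^α r_j(A^{k+L})^{1−α} ) / ( r_i(A^k)^α r_j(A^k)^{1−α} ) ≤ ρ(A)^L ≤ max over pairs (i,j) with a_{ij}^{(L)} > 0 of ( r_i(A^{k+L})^α r_j(A^{k+L})^{1−α} ) / ( r_i(A^k)^α r_j(A^k)^{1−α} ). -/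

import Mathlib

open Matrix

/-- The spectral radius of a real square matrix: the maximum modulus of its
complex eigenvalues (elements of the spectrum of the matrix over `ℂ`). -/
noncomputable def specRad {n : ℕ} (A : Matrix (Fin n) (Fin n) ℝ) : ℝ :=
  sSup ((fun μ : ℂ => ‖μ‖) '' spectrum ℂ (A.map (fun x : ℝ => (x : ℂ))))

/-- `rowSum A i` is the `i`-th row sum of `A`. -/
noncomputable def rowSum {n : ℕ} (A : Matrix (Fin n) (Fin n) ℝ) (i : Fin n) : ℝ :=
  ∑ j, A i j

/-- A square matrix is irreducible if it cannot be symmetrically permuted to a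
nontrivial block upper-triangular form; equivalently, for every nonempty proper
subset `S` of indices there is a nonzero entry leading from `S` to its complement. -/
def IsIrred {n : ℕ} (A : Matrix (Fin n) (Fin n) ℝ) : Prop :=
  ∀ S : Set (Fin n), S.Nonempty → S ≠ Set.univ → ∃ i ∈ S, ∃ j ∈ Sᶜ, A i j ≠ 0

section Helpers

attribute [local instance] Matrix.linftyOpNormedRing Matrix.linftyOpNormedAlgebra

variable {n : ℕ}

lemma rowSum_mul (M N : Matrix (Fin n) (Fin n) ℝ) (i : Fin n) :
    rowSum (M * N) i = ∑ j, M i j * rowSum N j := by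
  simp only [rowSum, Matrix.mul_apply, Finset.mul_sum]
  exact Finset.sum_comm

lemma pow_entry_nonneg {A : Matrix (Fin n) (Fin n) ℝ} (hA : ∀ i j, 0 ≤ A i j) (k : ℕ) :
    ∀ i j, 0 ≤ (A ^ k) i j := by
  induction k with
  | zero => intro i j; simp [Matrix.one_apply]; split <;> norm_num
  | succ k ih =>
    intro i j
    rw [pow_succ, Matrix.mul_apply]
    exact Finset.sum_nonneg fun l _ => mul_nonneg (ih i l) (hA l j)

lemma rowSum_pow_pos {A : Matrix (Fin n) (Fin n) ℝ} (hA : ∀ i j, 0 ≤ A i j)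
    (hr : ∀ i, rowSum A i ≠ 0) (k : ℕ) : ∀ i, 0 < rowSum (A ^ k) i := by
  induction k with
  | zero => intro i; simp [rowSum, Matrix.one_apply]
  | succ k ih =>
    intro i
    rw [pow_succ', rowSum_mul]
    have hApos : ∃ j, 0 < A i j := by
      by_contra h
      push_neg at h
      exact hr i (le_antisymm (Finset.sum_nonpos fun j _ => h j) (Finset.sum_nonneg fun j _ => hA i j))
    obtain ⟨j₀, hj₀⟩ := hApos
    exact Finset.sum_pos' (fun j _ => mul_nonneg (hA i j) (ih j).le)
      ⟨j₀, Finset.mem_univ j₀, mul_pos hj₀ (ih j₀)⟩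


lemma row_nnnorm_eq (X : Matrix (Fin n) (Fin n) ℝ) (hX : ∀ i j, 0 ≤ X i j) (i : Fin n) :
    ((∑ j, ‖(X.map (fun x : ℝ => (x : ℂ))) i j‖₊ : NNReal) : ℝ) = rowSum X i := by
  simp only [Matrix.map_apply]
  push_cast
  simp only [coe_nnnorm, Complex.norm_real, Real.norm_eq_abs, rowSum]
  exact Finset.sum_congr rfl fun j _ => abs_of_nonneg (hX i j)

lemma norm_map_le (X : Matrix (Fin n) (Fin n) ℝ) (hX : ∀ i j, 0 ≤ X i j) {M : ℝ}
    (hM : 0 ≤ M) (h : ∀ i, rowSum X i ≤ M) :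
    ‖X.map (fun x : ℝ => (x : ℂ))‖ ≤ M := by
  rw [Matrix.linfty_opNorm_def]
  rw [← Real.coe_toNNReal M hM]
  rw [NNReal.coe_le_coe]
  refine Finset.sup_le fun i _ => ?_
  rw [← NNReal.coe_le_coe, Real.coe_toNNReal M hM]
  calc ((∑ j, ‖(X.map (fun x : ℝ => (x : ℂ))) i j‖₊ : NNReal) : ℝ)
      = rowSum X i := row_nnnorm_eq X hX i
    _ ≤ M := h i

lemma rowSum_le_norm_map (X : Matrix (Fin n) (Fin n) ℝ) (hX : ∀ i j, 0 ≤ X i j) (i : Fin n) :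
    rowSum X i ≤ ‖X.map (fun x : ℝ => (x : ℂ))‖ := by
  rw [Matrix.linfty_opNorm_def, ← row_nnnorm_eq X hX i]
  exact_mod_cast Finset.le_sup (f := fun i => ∑ j, ‖(X.map (fun x : ℝ => (x : ℂ))) i j‖₊)
    (Finset.mem_univ i)

lemma map_pow_comm (X : Matrix (Fin n) (Fin n) ℝ) (p : ℕ) :
    (X.map (fun x : ℝ => (x : ℂ))) ^ p = (X ^ p).map (fun x : ℝ => (x : ℂ)) := by
  have h : ∀ Y : Matrix (Fin n) (Fin n) ℝ, Y.map (fun x : ℝ => (x : ℂ))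
      = (algebraMap ℝ ℂ).mapMatrix Y := by
    intro Y; simp [RingHom.mapMatrix_apply]
  rw [h, h, ← map_pow]

lemma rowSum_pow_ge {X : Matrix (Fin n) (Fin n) ℝ} (hX : ∀ i j, 0 ≤ X i j) {m : ℝ}
    (hm : 0 ≤ m) (h : ∀ i, m ≤ rowSum X i) (p : ℕ) : ∀ i, m ^ p ≤ rowSum (X ^ p) i := by
  induction p with
  | zero => intro i; simp [rowSum, Matrix.one_apply]
  | succ p ih =>
    intro i
    have hrs : rowSum (X ^ (p + 1)) i = ∑ j, X i j * rowSum (X ^ p) j := by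
      rw [pow_succ', rowSum_mul]
    rw [hrs]
    calc m ^ (p + 1) = m * m ^ p := by ring
      _ ≤ rowSum X i * m ^ p := by
          exact mul_le_mul_of_nonneg_right (h i) (pow_nonneg hm p)
      _ = ∑ j, X i j * m ^ p := by rw [rowSum, Finset.sum_mul]
      _ ≤ ∑ j, X i j * rowSum (X ^ p) j :=
          Finset.sum_le_sum fun j _ => mul_le_mul_of_nonneg_left (ih j) (hX i j)

lemma specRadius_lower [Nonempty (Fin n)] (X : Matrix (Fin n) (Fin n) ℝ)
    (hX : ∀ i j, 0 ≤ X i j) {m : ℝ} (hm : 0 ≤ m) (h : ∀ i, m ≤ rowSum X i) :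
    ENNReal.ofReal m ≤ spectralRadius ℂ (X.map (fun x : ℝ => (x : ℂ))) := by
  refine ge_of_tendsto (spectrum.pow_nnnorm_pow_one_div_tendsto_nhds_spectralRadius
    (X.map (fun x : ℝ => (x : ℂ)))) ?_
  filter_upwards [Filter.eventually_ge_atTop 1] with p hp
  have hp0 : (p : ℝ) ≠ 0 := by positivity
  have h1 : m ^ p ≤ ‖(X.map (fun x : ℝ => (x : ℂ))) ^ p‖ := by
    rw [map_pow_comm]
    exact (rowSum_pow_ge hX hm h p (Classical.arbitrary _)).trans
      (rowSum_le_norm_map _ (pow_entry_nonneg hX p) _)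
  have h2 : (ENNReal.ofReal m) ^ p ≤ (‖(X.map (fun x : ℝ => (x : ℂ))) ^ p‖₊ : ENNReal) := by
    rw [← ENNReal.ofReal_pow hm, ← enorm_eq_nnnorm, ← ofReal_norm]
    exact ENNReal.ofReal_le_ofReal h1
  calc ENNReal.ofReal m
      = ((ENNReal.ofReal m) ^ p) ^ (1 / p : ℝ) := by
        rw [← ENNReal.rpow_natCast (ENNReal.ofReal m) p, ← ENNReal.rpow_mul,
          mul_one_div_cancel hp0, ENNReal.rpow_one]
    _ ≤ (‖(X.map (fun x : ℝ => (x : ℂ))) ^ p‖₊ : ENNReal) ^ (1 / p : ℝ) :=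
        ENNReal.rpow_le_rpow h2 (by positivity)

end Helpers

section Aux

attribute [local instance] Matrix.linftyOpNormedRing Matrix.linftyOpNormedAlgebra

variable {n : ℕ}

lemma exists_pos_entry {X : Matrix (Fin n) (Fin n) ℝ} (hX : ∀ i j, 0 ≤ X i j) (i : Fin n)
    (h : 0 < rowSum X i) : ∃ j, 0 < X i j := by
  by_contra hc
  push_neg at hc
  exact absurd h (not_lt.mpr (Finset.sum_nonpos fun j _ => hc j))

theorem stmt9' {n : ℕ} (A : Matrix (Fin n) (Fin n) ℝ)
    (hA : ∀ i j, 0 ≤ A i j) (hr : ∀ i, rowSum A i ≠ 0) (L k : ℕ) (hL : 1 ≤ L)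
    (α : ℝ) (hα0 : 0 ≤ α) (hα1 : α ≤ 1) :
    sInf {x : ℝ | ∃ i j : Fin n, 0 < (A ^ L) i j ∧
        x = rowSum (A ^ (k + L)) i ^ α * rowSum (A ^ (k + L)) j ^ (1 - α) /
              (rowSum (A ^ k) i ^ α * rowSum (A ^ k) j ^ (1 - α))} ≤ specRad A ^ L ∧
    specRad A ^ L ≤ sSup {x : ℝ | ∃ i j : Fin n, 0 < (A ^ L) i j ∧
        x = rowSum (A ^ (k + L)) i ^ α * rowSum (A ^ (k + L)) j ^ (1 - α) /
              (rowSum (A ^ k) i ^ α * rowSum (A ^ k) j ^ (1 - α))} := by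
  have hL0 : L ≠ 0 := by omega
  rcases Nat.eq_zero_or_pos n with hn | hn
  · -- degenerate case n = 0
    subst hn
    have hempty : ∀ P : Fin 0 → Fin 0 → Prop,
        {x : ℝ | ∃ i j : Fin 0, P i j ∧ x = 0} = ∅ := by
      intro P; ext x; simp [Fin.elim0]
    have hS : specRad A = 0 := by
      have : spectrum ℂ (A.map (fun x : ℝ => (x : ℂ))) = ∅ := by
        ext μ
        simp [spectrum.mem_iff, isUnit_of_subsingleton]
      simp [specRad, this, Real.sSup_empty]
    have h1 : {x : ℝ | ∃ i j : Fin 0, 0 < (A ^ L) i j ∧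
        x = rowSum (A ^ (k + L)) i ^ α * rowSum (A ^ (k + L)) j ^ (1 - α) /
              (rowSum (A ^ k) i ^ α * rowSum (A ^ k) j ^ (1 - α))} = ∅ := by
      ext x; simp only [Set.mem_setOf_eq, Set.mem_empty_iff_false, iff_false]
      rintro ⟨i, _⟩; exact i.elim0
    rw [h1, hS, zero_pow hL0, Real.sInf_empty, Real.sSup_empty]
    exact ⟨le_refl 0, le_refl 0⟩
  have : Nonempty (Fin n) := ⟨⟨0, hn⟩⟩
  -- abbreviations
  set s : Fin n → ℝ := rowSum (A ^ k) with hs_def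
  set R : Fin n → ℝ := rowSum (A ^ (k + L)) with hR_def
  set B : Matrix (Fin n) (Fin n) ℝ := A ^ L with hB_def
  set S : Set ℝ := {x : ℝ | ∃ i j : Fin n, 0 < B i j ∧
      x = R i ^ α * R j ^ (1 - α) / (s i ^ α * s j ^ (1 - α))} with hS_def
  have hs : ∀ i, 0 < s i := rowSum_pow_pos hA hr k
  have hR : ∀ i, 0 < R i := rowSum_pow_pos hA hr (k + L)
  have hB : ∀ i j, 0 ≤ B i j := pow_entry_nonneg hA L
  have hRsum : ∀ i, ∑ j, B i j * s j = R i := by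
    intro i
    rw [hR_def, hs_def, hB_def, show k + L = L + k from add_comm k L, pow_add, rowSum_mul]
  -- the weight vector
  set w : Fin n → ℝ := fun j => s j ^ α * R j ^ (1 - α) with hw_def
  have hw : ∀ j, 0 < w j := fun j =>
    mul_pos (Real.rpow_pos_of_pos (hs j) α) (Real.rpow_pos_of_pos (hR j) (1 - α))
  -- basic facts about S
  have hSfin : S.Finite := by
    apply Set.Finite.subset (Set.finite_range
      (fun p : Fin n × Fin n => R p.1 ^ α * R p.2 ^ (1 - α) / (s p.1 ^ α * s p.2 ^ (1 - α))))
    rintro x ⟨i, j, _, rfl⟩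
    exact ⟨(i, j), rfl⟩
  have hSne : S.Nonempty := by
    obtain ⟨j₀, hj₀⟩ := exists_pos_entry hB (Classical.arbitrary _)
      (rowSum_pow_pos hA hr L (Classical.arbitrary _))
    exact ⟨_, Classical.arbitrary _, j₀, hj₀, rfl⟩
  have hSnonneg : ∀ x ∈ S, 0 ≤ x := by
    rintro x ⟨i, j, _, rfl⟩
    exact div_nonneg (mul_nonneg (Real.rpow_pos_of_pos (hR i) α).le
      (Real.rpow_pos_of_pos (hR j) (1 - α)).le)
      (mul_nonneg (Real.rpow_pos_of_pos (hs i) α).le (Real.rpow_pos_of_pos (hs j) (1 - α)).le)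
  set M : ℝ := sSup S with hM_def
  set m : ℝ := sInf S with hm_def
  have hM0 : 0 ≤ M := Real.sSup_nonneg hSnonneg
  have hm0 : 0 ≤ m := Real.sInf_nonneg hSnonneg
  have hPM : ∀ i j, 0 < B i j →
      R i ^ α * R j ^ (1 - α) / (s i ^ α * s j ^ (1 - α)) ≤ M :=
    fun i j h => le_csSup hSfin.bddAbove ⟨i, j, h, rfl⟩
  have hPm : ∀ i j, 0 < B i j →
      m ≤ R i ^ α * R j ^ (1 - α) / (s i ^ α * s j ^ (1 - α)) :=
    fun i j h => csInf_le hSfin.bddBelow ⟨i, j, h, rfl⟩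
  -- the conjugated matrix E
  set E : Matrix (Fin n) (Fin n) ℝ := Matrix.of (fun i j => B i j * w j / w i) with hE_def
  have hE : ∀ i j, 0 ≤ E i j := fun i j => by
    have : E i j = B i j * w j / w i := rfl
    rw [this]
    exact div_nonneg (mul_nonneg (hB i j) (hw j).le) (hw i).le
  have hrowE : ∀ i, rowSum E i = (∑ j, B i j * w j) / w i := by
    intro i
    rw [rowSum, Finset.sum_div]
    rfl
  -- term-wise bounds
  have hsj_split : ∀ j : Fin n, s j ^ (1 - α) * s j ^ α = s j := by
    intro j
    rw [← Real.rpow_add (hs j), sub_add_cancel, Real.rpow_one]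
  have hRsplit : ∀ i : Fin n, R i ^ α * R i ^ (1 - α) = R i := by
    intro i
    rw [← Real.rpow_add (hR i), add_sub_cancel, Real.rpow_one]
  have keyU : ∀ i j, 0 < B i j → w j ≤ M * s i ^ α / R i ^ α * s j := by
    intro i j h
    have hk : R i ^ α * R j ^ (1 - α) ≤ M * (s i ^ α * s j ^ (1 - α)) :=
      (div_le_iff₀ (mul_pos (Real.rpow_pos_of_pos (hs i) α)
        (Real.rpow_pos_of_pos (hs j) (1 - α)))).mp (hPM i j h)
    have h2 : R i ^ α * (s j ^ α * R j ^ (1 - α)) ≤ M * s i ^ α * s j := by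
      calc R i ^ α * (s j ^ α * R j ^ (1 - α))
          = (R i ^ α * R j ^ (1 - α)) * s j ^ α := by ring
        _ ≤ (M * (s i ^ α * s j ^ (1 - α))) * s j ^ α :=
            mul_le_mul_of_nonneg_right hk (Real.rpow_pos_of_pos (hs j) α).le
        _ = M * s i ^ α * (s j ^ (1 - α) * s j ^ α) := by ring
        _ = M * s i ^ α * s j := by rw [hsj_split]
    have h3 : M * s i ^ α / R i ^ α * s j = (M * s i ^ α * s j) / R i ^ α := by ring
    rw [hw_def, h3, le_div_iff₀ (Real.rpow_pos_of_pos (hR i) α), mul_comm]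
    exact h2
  have keyL : ∀ i j, 0 < B i j → m * s i ^ α / R i ^ α * s j ≤ w j := by
    intro i j h
    have hk : m * (s i ^ α * s j ^ (1 - α)) ≤ R i ^ α * R j ^ (1 - α) :=
      (le_div_iff₀ (mul_pos (Real.rpow_pos_of_pos (hs i) α)
        (Real.rpow_pos_of_pos (hs j) (1 - α)))).mp (hPm i j h)
    have h2 : m * s i ^ α * s j ≤ R i ^ α * (s j ^ α * R j ^ (1 - α)) := by
      calc m * s i ^ α * s j
          = m * s i ^ α * (s j ^ (1 - α) * s j ^ α) := by rw [hsj_split]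
        _ = (m * (s i ^ α * s j ^ (1 - α))) * s j ^ α := by ring
        _ ≤ (R i ^ α * R j ^ (1 - α)) * s j ^ α :=
            mul_le_mul_of_nonneg_right hk (Real.rpow_pos_of_pos (hs j) α).le
        _ = R i ^ α * (s j ^ α * R j ^ (1 - α)) := by ring
    have h3 : m * s i ^ α / R i ^ α * s j = (m * s i ^ α * s j) / R i ^ α := by ring
    rw [hw_def, h3, div_le_iff₀ (Real.rpow_pos_of_pos (hR i) α), mul_comm (s j ^ α * R j ^ (1 - α))]
    exact h2
  -- row sum bounds for E
  have hwi_eq : ∀ i : Fin n, s i ^ α / R i ^ α * R i = w i := by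
    intro i
    have h4 : R i ^ (1 - α) = R i / R i ^ α := by
      rw [Real.rpow_sub (hR i), Real.rpow_one]
    rw [hw_def]
    dsimp only
    rw [h4]
    ring
  have hupper : ∀ i, rowSum E i ≤ M := by
    intro i
    rw [hrowE, div_le_iff₀ (hw i)]
    calc ∑ j, B i j * w j ≤ ∑ j, B i j * (M * s i ^ α / R i ^ α * s j) := by
          apply Finset.sum_le_sum
          intro j _
          rcases lt_or_eq_of_le (hB i j) with h | h
          · exact mul_le_mul_of_nonneg_left (keyU i j h) (hB i j)
          · rw [← h, zero_mul, zero_mul]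
      _ = M * s i ^ α / R i ^ α * ∑ j, B i j * s j := by
          rw [Finset.mul_sum]; apply Finset.sum_congr rfl; intro j _; ring
      _ = M * (s i ^ α / R i ^ α * R i) := by rw [hRsum i]; ring
      _ = M * w i := by rw [hwi_eq]
  have hlower : ∀ i, m ≤ rowSum E i := by
    intro i
    rw [hrowE, le_div_iff₀ (hw i)]
    calc m * w i = m * (s i ^ α / R i ^ α * R i) := by rw [hwi_eq]
      _ = m * s i ^ α / R i ^ α * ∑ j, B i j * s j := by rw [hRsum i]; ring
      _ = ∑ j, B i j * (m * s i ^ α / R i ^ α * s j) := by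
          rw [Finset.mul_sum]; apply Finset.sum_congr rfl; intro j _; ring
      _ ≤ ∑ j, B i j * w j := by
          apply Finset.sum_le_sum
          intro j _
          rcases lt_or_eq_of_le (hB i j) with h | h
          · exact mul_le_mul_of_nonneg_left (keyL i j h) (hB i j)
          · rw [← h, zero_mul, zero_mul]
  -- conjugation
  set w' : Fin n → ℂ := fun i => ((w i : ℝ) : ℂ) with hw'_def
  set dinv : Fin n → ℂ := fun i => (((w i)⁻¹ : ℝ) : ℂ) with hdinv_def
  have hw'ne : ∀ i, w' i ≠ 0 := fun i => by
    simp [hw'_def, (hw i).ne']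
  have hfun1 : (fun i => w' i * dinv i) = fun _ : Fin n => (1 : ℂ) := by
    funext i
    rw [hw'_def, hdinv_def]
    push_cast
    exact mul_inv_cancel₀ (by exact_mod_cast (hw i).ne')
  have hfun2 : (fun i => dinv i * w' i) = fun _ : Fin n => (1 : ℂ) := by
    funext i
    rw [hw'_def, hdinv_def]
    push_cast
    exact inv_mul_cancel₀ (by exact_mod_cast (hw i).ne')
  have hval_inv : diagonal w' * diagonal dinv = 1 := by
    rw [diagonal_mul_diagonal, hfun1, diagonal_one]
  have hinv_val : diagonal dinv * diagonal w' = 1 := by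
    rw [diagonal_mul_diagonal, hfun2, diagonal_one]
  set u : (Matrix (Fin n) (Fin n) ℂ)ˣ := ⟨diagonal w', diagonal dinv, hval_inv, hinv_val⟩
    with hu_def
  have hconj : E.map (fun x : ℝ => (x : ℂ)) =
      (↑(u⁻¹) : Matrix (Fin n) (Fin n) ℂ) * (B.map (fun x : ℝ => (x : ℂ)))
        * (↑u : Matrix (Fin n) (Fin n) ℂ) := by
    have h1 : (↑(u⁻¹) : Matrix (Fin n) (Fin n) ℂ) = diagonal dinv := rfl
    have h2 : (↑u : Matrix (Fin n) (Fin n) ℂ) = diagonal w' := rfl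
    rw [h1, h2]
    ext i j
    rw [Matrix.mul_diagonal, Matrix.diagonal_mul, Matrix.map_apply, Matrix.map_apply]
    have : E i j = B i j * w j / w i := rfl
    rw [this, hdinv_def, hw'_def]
    push_cast
    rw [div_eq_mul_inv]
    ring
  have hspecE : spectrum ℂ (E.map (fun x : ℝ => (x : ℂ)))
      = spectrum ℂ (B.map (fun x : ℝ => (x : ℂ))) := by
    rw [hconj]
    exact spectrum.units_conjugate'
  have hBpow : B.map (fun x : ℝ => (x : ℂ)) = (A.map (fun x : ℝ => (x : ℂ))) ^ L := by
    rw [hB_def, map_pow_comm]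
  -- spectral radius: upper bound
  have hLR : (L : ℝ) ≠ 0 := Nat.cast_ne_zero.mpr hL0
  have hnormE : ‖E.map (fun x : ℝ => (x : ℂ))‖ ≤ M := norm_map_le E hE hM0 hupper
  have habs_le : ∀ μ ∈ spectrum ℂ (A.map (fun x : ℝ => (x : ℂ))), ‖μ‖ ^ L ≤ M := by
    intro μ hμ
    have h1 : μ ^ L ∈ spectrum ℂ (B.map (fun x : ℝ => (x : ℂ))) := by
      rw [hBpow]
      exact spectrum.pow_image_subset _ L ⟨μ, hμ, rfl⟩
    have h2 : ‖μ ^ L‖ ≤ ‖E.map (fun x : ℝ => (x : ℂ))‖ :=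
      spectrum.norm_le_norm_of_mem (hspecE ▸ h1)
    calc ‖μ‖ ^ L = ‖μ ^ L‖ := by rw [norm_pow]
      _ ≤ M := h2.trans hnormE
  have hspecRad0 : 0 ≤ specRad A := by
    apply Real.sSup_nonneg
    rintro x ⟨μ, _, rfl⟩
    exact norm_nonneg μ
  have hub : specRad A ^ L ≤ M := by
    have hsr : specRad A ≤ M ^ ((1 : ℝ) / L) := by
      apply Real.sSup_le
      · rintro x ⟨μ, hμ, rfl⟩
        have h1 : ‖μ‖ ^ L ≤ M := habs_le μ hμ
        calc ‖μ‖
            = (‖μ‖ ^ L) ^ ((1 : ℝ) / L) := by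
              rw [← Real.rpow_natCast (‖μ‖) L, ← Real.rpow_mul (norm_nonneg μ),
                mul_one_div_cancel hLR, Real.rpow_one]
          _ ≤ M ^ ((1 : ℝ) / L) :=
              Real.rpow_le_rpow (by positivity) h1 (by positivity)
      · exact Real.rpow_nonneg hM0 _
    calc specRad A ^ L ≤ (M ^ ((1 : ℝ) / L)) ^ L := pow_le_pow_left₀ hspecRad0 hsr L
      _ = M := by
        rw [← Real.rpow_natCast (M ^ ((1 : ℝ) / L)) L, ← Real.rpow_mul hM0,
          one_div_mul_cancel hLR, Real.rpow_one]
  -- spectral radius: lower bound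
  have hbddA : BddAbove ((fun μ : ℂ => ‖μ‖) '' spectrum ℂ
      (A.map (fun x : ℝ => (x : ℂ)))) := by
    refine ⟨‖A.map (fun x : ℝ => (x : ℂ))‖, ?_⟩
    rintro x ⟨μ, hμ, rfl⟩
    exact spectrum.norm_le_norm_of_mem hμ
  have hlb : m ≤ specRad A ^ L := by
    have h1 : ENNReal.ofReal m ≤ spectralRadius ℂ (E.map (fun x : ℝ => (x : ℂ))) :=
      specRadius_lower E hE hm0 hlower
    have h2 : spectralRadius ℂ (E.map (fun x : ℝ => (x : ℂ)))
        ≤ ENNReal.ofReal (specRad A ^ L) := by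
      rw [spectralRadius]
      refine iSup₂_le fun lam hlam => ?_
      rw [hspecE, hBpow, spectrum.map_pow_of_pos _ (by omega : 0 < L)] at hlam
      obtain ⟨μ, hμ, rfl⟩ := hlam
      have habs : ‖μ‖ ≤ specRad A := le_csSup hbddA ⟨μ, hμ, rfl⟩
      have h3 : ‖μ ^ L‖ ≤ specRad A ^ L := by
        rw [norm_pow]
        exact pow_le_pow_left₀ (norm_nonneg μ) habs L
      rw [← enorm_eq_nnnorm, ← ofReal_norm]
      exact ENNReal.ofReal_le_ofReal h3
    exact (ENNReal.ofReal_le_ofReal_iff (pow_nonneg hspecRad0 L)).mp (h1.trans h2)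
  exact ⟨hlb, hub⟩

end Aux


/-- inequality (9) of the paper — Kolotilina's bound applied to `D⁻¹AᴸD`.
For a nonnegative matrix `A` with all row sums nonzero, integers `L ≥ 1`, `k ≥ 0`, and
`0 ≤ α ≤ 1`, `ρ(A)^L` is bounded below and above by the min resp. max over pairs `(i,j)`
with `(A^L)_{ij} > 0` of `(r_i(A^{k+L})^α r_j(A^{k+L})^{1-α}) / (r_i(A^k)^α r_j(A^k)^{1-α})`. -/
theorem stmt9 {n : ℕ} (A : Matrix (Fin n) (Fin n) ℝ)
    (hA : ∀ i j, 0 ≤ A i j) (hr : ∀ i, rowSum A i ≠ 0) (L k : ℕ) (hL : 1 ≤ L)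
    (α : ℝ) (hα0 : 0 ≤ α) (hα1 : α ≤ 1) :
    sInf {x : ℝ | ∃ i j : Fin n, 0 < (A ^ L) i j ∧
        x = rowSum (A ^ (k + L)) i ^ α * rowSum (A ^ (k + L)) j ^ (1 - α) /
              (rowSum (A ^ k) i ^ α * rowSum (A ^ k) j ^ (1 - α))} ≤ specRad A ^ L ∧
    specRad A ^ L ≤ sSup {x : ℝ | ∃ i j : Fin n, 0 < (A ^ L) i j ∧
        x = rowSum (A ^ (k + L)) i ^ α * rowSum (A ^ (k + L)) j ^ (1 - α) /
              (rowSum (A ^ k) i ^ α * rowSum (A ^ k) j ^ (1 - α))} := by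
  exact stmt9' A hA hr L k hL α hα0 hα1
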